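/- For all R ≥ 0 and all symmetric d×d matrices A, B with |B^D| ≤ R, the variational inequality (P_R(A) − A, P_R(A) − B) ≤ 0 holds, where (·,·) is the Frobenius inner product. In other words, P_R is the metric projection onto the set {C ∈ S_d : |C^D| ≤ R}. -/

import Mathlib

open Matrix

variable {d : ℕ}

/-- Frobenius inner product of matrices. -/
def finner (A B : Matrix (Fin d) (Fin d) ℝ) : ℝ := ∑ i, ∑ j, A i j * B i j

/-- Frobenius norm. -/
noncomputable def fnorm (A : Matrix (Fin d) (Fin d) ℝ) : ℝ := Real.sqrt (finner A A)

/-- Deviatoric part `A - (tr A / d) • E_d`. -/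
noncomputable def dev (A : Matrix (Fin d) (Fin d) ℝ) : Matrix (Fin d) (Fin d) ℝ :=
  A - (Matrix.trace A / (d : ℝ)) • (1 : Matrix (Fin d) (Fin d) ℝ)

/-- The truncation map Φ. -/
noncomputable def Phi (A : Matrix (Fin d) (Fin d) ℝ) : Matrix (Fin d) (Fin d) ℝ :=
  if fnorm A ≤ 1 then A else (fnorm A)⁻¹ • A

/-- The projection-type map `P_R`. -/
noncomputable def Pop (R : ℝ) (A : Matrix (Fin d) (Fin d) ℝ) : Matrix (Fin d) (Fin d) ℝ :=
  if 0 < R then (Matrix.trace A / (d : ℝ)) • (1 : Matrix (Fin d) (Fin d) ℝ) + R • Phi (R⁻¹ • dev A)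
  else (Matrix.trace A / (d : ℝ)) • (1 : Matrix (Fin d) (Fin d) ℝ)

open RealInnerProductSpace

/-- Embedding of matrices into Euclidean space. -/
noncomputable def emb (A : Matrix (Fin d) (Fin d) ℝ) : EuclideanSpace ℝ (Fin d × Fin d) :=
  (WithLp.equiv 2 _).symm (fun p => A p.1 p.2)

lemma emb_smul (c : ℝ) (A : Matrix (Fin d) (Fin d) ℝ) : emb (c • A) = c • emb A := rfl

lemma emb_add (A B : Matrix (Fin d) (Fin d) ℝ) : emb (A + B) = emb A + emb B := rfl

lemma emb_sub (A B : Matrix (Fin d) (Fin d) ℝ) : emb (A - B) = emb A - emb B := rfl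

lemma emb_neg (A : Matrix (Fin d) (Fin d) ℝ) : emb (-A) = -emb A := rfl

lemma finner_eq (A B : Matrix (Fin d) (Fin d) ℝ) : finner A B = ⟪emb A, emb B⟫ := by
  simp [finner, emb, PiLp.inner_apply, RCLike.inner_apply, Fintype.sum_prod_type]
  exact Finset.sum_congr rfl fun i _ => Finset.sum_congr rfl fun j _ => mul_comm _ _

lemma fnorm_eq (A : Matrix (Fin d) (Fin d) ℝ) : fnorm A = ‖emb A‖ := by
  rw [fnorm, finner_eq, real_inner_self_eq_norm_mul_norm]
  exact Real.sqrt_mul_self (norm_nonneg _)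

lemma inner_emb_one (X : Matrix (Fin d) (Fin d) ℝ) :
    ⟪emb X, emb (1 : Matrix (Fin d) (Fin d) ℝ)⟫ = X.trace := by
  rw [← finner_eq]
  simp [finner, Matrix.one_apply, Matrix.trace, Matrix.diag]

lemma trace_dev (hd0 : (d : ℝ) ≠ 0) (A : Matrix (Fin d) (Fin d) ℝ) :
    (dev A).trace = 0 := by
  simp only [dev, Matrix.trace_sub, Matrix.trace_smul, Matrix.trace_one, smul_eq_mul]
  field_simp
  simp [Fintype.card_fin]

theorem stmt_4 (hd : 2 ≤ d) (R : ℝ) (hR : 0 ≤ R)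
    (A B : Matrix (Fin d) (Fin d) ℝ) (hA : A.IsSymm) (hB : B.IsSymm)
    (hBD : fnorm (dev B) ≤ R) :
    finner (Pop R A - A) (Pop R A - B) ≤ 0 := by
  have hd0 : (d : ℝ) ≠ 0 := Nat.cast_ne_zero.mpr (by omega)
  set a := emb (dev A) with ha
  set b := emb (dev B) with hb
  set e := emb (1 : Matrix (Fin d) (Fin d) ℝ) with he
  have hae : ⟪a, e⟫ = 0 := by rw [ha, he, inner_emb_one, trace_dev hd0]
  have hBsplit : B = dev B + (B.trace / (d : ℝ)) • (1 : Matrix (Fin d) (Fin d) ℝ) := by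
    simp [dev]
  rcases eq_or_lt_of_le hR with hR0 | hRpos
  · -- R = 0
    have hb0 : b = 0 := by
      have h1 : fnorm (dev B) = 0 :=
        le_antisymm (hR0 ▸ hBD) (Real.sqrt_nonneg _)
      rw [fnorm_eq] at h1
      exact norm_eq_zero.mp h1
    have hPop : Pop R A = (A.trace / (d : ℝ)) • (1 : Matrix (Fin d) (Fin d) ℝ) := by
      rw [Pop, if_neg (by rw [← hR0]; exact lt_irrefl 0)]
    have hX : Pop R A - A = -(dev A) := by rw [hPop]; simp [dev]
    have hY : Pop R A - B =
        ((A.trace - B.trace) / (d : ℝ)) • (1 : Matrix (Fin d) (Fin d) ℝ) - dev B := by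
      rw [hPop]; nth_rewrite 1 [hBsplit]
      module
    rw [finner_eq, hX, hY, emb_neg, emb_sub, emb_smul, ← ha, ← hb, ← he, hb0]
    simp [inner_sub_right, inner_smul_right, hae]
  · -- R > 0
    have hRne : R ≠ 0 := ne_of_gt hRpos
    have hnb : ‖b‖ ≤ R := by rw [hb, ← fnorm_eq]; exact hBD
    have hfn : fnorm (R⁻¹ • dev A) = R⁻¹ * ‖a‖ := by
      rw [fnorm_eq, emb_smul, norm_smul, ← ha, Real.norm_eq_abs,
        abs_of_pos (inv_pos.mpr hRpos)]
    by_cases hc : fnorm (R⁻¹ • dev A) ≤ 1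
    · -- no truncation: Pop R A = A
      have hPop : Pop R A = A := by
        rw [Pop, if_pos hRpos, Phi, if_pos hc, smul_smul, mul_inv_cancel₀ hRne,
          one_smul, dev]
        abel
      rw [hPop, sub_self]
      simp [finner]
    · -- truncation case
      have hc1 : 1 < R⁻¹ * ‖a‖ := by rw [← hfn]; exact not_le.mp hc
      have hna : R < ‖a‖ := by nlinarith [mul_lt_mul_of_pos_left hc1 hRpos, mul_inv_cancel₀ hRne]
      have hna0 : (0:ℝ) < ‖a‖ := lt_trans hRpos hna
      set c : ℝ := R * ‖a‖⁻¹ with hcdef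
      have hPop : Pop R A = (A.trace / (d : ℝ)) • (1 : Matrix (Fin d) (Fin d) ℝ)
          + c • dev A := by
        rw [Pop, if_pos hRpos, Phi, if_neg hc, hfn, smul_smul, smul_smul]
        congr 1
        congr 1
        rw [hcdef]
        field_simp
      have hX : Pop R A - A = (c - 1) • dev A := by
        rw [hPop, dev]; module
      have hY : Pop R A - B =
          ((A.trace - B.trace) / (d : ℝ)) • (1 : Matrix (Fin d) (Fin d) ℝ)
          + c • dev A - dev B := by
        rw [hPop]; nth_rewrite 1 [hBsplit]; module
      rw [finner_eq, hX, hY, emb_sub, emb_add, emb_smul, emb_smul, emb_smul,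
        ← ha, ← hb, ← he]
      have h1 : ⟪a, b⟫ ≤ ‖a‖ * R :=
        le_trans (real_inner_le_norm a b) (by nlinarith)
      have h3 : c < 1 := by
        rw [hcdef]
        nlinarith [mul_inv_cancel₀ (ne_of_gt hna0)]
      simp only [inner_sub_right, inner_add_right, inner_smul_left, inner_smul_right,
        real_inner_self_eq_norm_mul_norm, hae, RCLike.star_def, conj_trivial]
      have h2 : c * (‖a‖ * ‖a‖) = R * ‖a‖ := by
        rw [hcdef]; field_simp
      nlinarith [h1, h2, h3, hna]
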